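/- Let ν > 0, let Ω be a real symmetric 2×2 matrix, let W : ℝ → ℂ² be continuous and 2π-periodic, and let Z : ℝ → ℂ² be C¹ and 2π-periodic with Z(τ) + iΩ Z(τ) + ν Z′(τ) = W(τ) for all τ ∈ ℝ. Then for every τ ∈ ℝ, ‖Z(τ)‖ ≤ sup_{s ∈ [0,2π]} ‖W(s)‖, where ‖·‖ denotes the Euclidean norm on ℂ². -/

import Mathlib

open Real Complex Matrix

noncomputable def eE : (Fin 2 → ℂ) ≃L[ℂ] EuclideanSpace ℂ (Fin 2) :=
  (PiLp.continuousLinearEquiv 2 ℂ (fun _ : Fin 2 => ℂ)).symm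

lemma eE_apply (v : Fin 2 → ℂ) (i : Fin 2) : eE v i = v i := rfl

/-- The Euclidean norm on `ℂ²`. -/
noncomputable def enorm2 (v : Fin 2 → ℂ) : ℝ :=
  Real.sqrt (Complex.normSq (v 0) + Complex.normSq (v 1))

lemma enorm2_eq (v : Fin 2 → ℂ) : enorm2 v = ‖eE v‖ := by
  rw [EuclideanSpace.norm_eq]
  simp [enorm2, Fin.sum_univ_two, eE_apply, Complex.sq_norm]

lemma im_inner_symm (Ω : Matrix (Fin 2) (Fin 2) ℝ) (hΩ : Ω.IsSymm) (z : Fin 2 → ℂ) :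
    (inner ℂ (eE z) (eE ((Ω.map Complex.ofReal).mulVec z)) : ℂ).im = 0 := by
  have h01 : Ω 1 0 = Ω 0 1 := hΩ.apply 0 1
  simp only [PiLp.inner_apply, RCLike.inner_apply, Fin.sum_univ_two, eE_apply,
    Matrix.mulVec, dotProduct, Matrix.map_apply, starRingEnd_apply]
  simp [Complex.add_im, Complex.mul_im, h01]
  ring

set_option maxHeartbeats 1000000 in
/-- A priori estimate: if `Ω` is real symmetric, `W` is
continuous and `2π`-periodic, and `Z` is `C¹`, `2π`-periodic and satisfies
`Z + iΩZ + νZ′ = W` with `ν > 0`, then `‖Z(τ)‖ ≤ sup_{s∈[0,2π]} ‖W(s)‖`. -/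
theorem stmt_14 (ν : ℝ) (hν : 0 < ν)
    (Ω : Matrix (Fin 2) (Fin 2) ℝ) (hΩ : Ω.IsSymm)
    (W : ℝ → Fin 2 → ℂ) (hWc : Continuous W) (hWper : Function.Periodic W (2 * π))
    (Z : ℝ → Fin 2 → ℂ) (hZ : ContDiff ℝ 1 Z) (hZper : Function.Periodic Z (2 * π))
    (heq : ∀ τ : ℝ,
      Z τ + Complex.I • (Ω.map Complex.ofReal).mulVec (Z τ) + ν • deriv Z τ = W τ) :
    ∀ τ : ℝ, enorm2 (Z τ) ≤ sSup ((fun s => enorm2 (W s)) '' Set.Icc 0 (2 * π)) := by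
  have hπ : 0 < 2 * π := by positivity
  have hZd : Differentiable ℝ Z := hZ.differentiable one_ne_zero
  set L : (Fin 2 → ℂ) →L[ℝ] EuclideanSpace ℂ (Fin 2) :=
    (eE.toContinuousLinearMap).restrictScalars ℝ with hL
  set ZE : ℝ → EuclideanSpace ℂ (Fin 2) := fun τ => eE (Z τ) with hZEdef
  set WE : ℝ → EuclideanSpace ℂ (Fin 2) := fun τ => eE (W τ) with hWEdef
  have hZE : ∀ τ, HasDerivAt ZE (eE (deriv Z τ)) τ := fun τ =>
    L.hasFDerivAt.comp_hasDerivAt τ (hZd τ).hasDerivAt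
  set g : ℝ → ℝ := fun τ => ‖ZE τ‖ ^ 2 with hgdef
  have hg : ∀ τ, HasDerivAt g
      (2 * Complex.re (inner ℂ (ZE τ) (eE (deriv Z τ)) : ℂ)) τ := by
    intro τ
    have h1 := HasDerivAt.inner ℂ (hZE τ) (hZE τ)
    have h2 := Complex.reCLM.hasFDerivAt.comp_hasDerivAt τ h1
    simp only [Function.comp_def] at h2
    have h3 : (fun t => Complex.reCLM ((inner ℂ (ZE t) (ZE t) : ℂ))) = g := by
      funext t
      simpa using inner_self_eq_norm_sq (𝕜 := ℂ) (ZE t)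
    rw [h3] at h2
    refine h2.congr_deriv ?_
    simp only [Complex.reCLM_apply, Complex.add_re]
    rw [← inner_conj_symm (ZE τ) (eE (deriv Z τ)), Complex.conj_re]
    ring
  have hZEc : Continuous ZE := eE.continuous.comp hZ.continuous
  have hgc : Continuous g := hZEc.norm.pow 2
  obtain ⟨τ₀, hτ₀mem, hτ₀max⟩ :=
    isCompact_Icc.exists_isMaxOn (Set.nonempty_Icc.2 hπ.le) hgc.continuousOn
  have hgper : Function.Periodic g (2 * π) := fun t => by
    simp only [hgdef, hZEdef, hZper t]
  have hmax : ∀ t, g t ≤ g τ₀ := by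
    intro t
    obtain ⟨y, hy, hyt⟩ := hgper.exists_mem_Ico₀ hπ t
    rw [hyt]
    exact hτ₀max (Set.Ico_subset_Icc_self hy)
  have hderiv0 : deriv g τ₀ = 0 :=
    IsLocalMax.deriv_eq_zero (Filter.Eventually.of_forall hmax)
  have hkey0 : Complex.re (inner ℂ (ZE τ₀) (eE (deriv Z τ₀)) : ℂ) = 0 := by
    have h := (hg τ₀).deriv
    rw [hderiv0] at h
    linarith
  have heq0 : ν • deriv Z τ₀
      = W τ₀ - (Z τ₀ + Complex.I • (Ω.map Complex.ofReal).mulVec (Z τ₀)) := by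
    rw [← heq τ₀]; abel
  have heqE : ν • eE (deriv Z τ₀) =
      WE τ₀ - (ZE τ₀ + Complex.I • eE ((Ω.map Complex.ofReal).mulVec (Z τ₀))) :=
    congrArg (⇑eE) heq0
  have hkey : ‖ZE τ₀‖ ^ 2 = Complex.re (inner ℂ (ZE τ₀) (WE τ₀) : ℂ) := by
    have h7 : Complex.re (inner ℂ (ZE τ₀) (ν • eE (deriv Z τ₀)) : ℂ) = 0 := by
      rw [← Complex.coe_smul, inner_smul_right]
      simp only [Complex.mul_re, Complex.ofReal_re, Complex.ofReal_im, hkey0]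
      ring
    rw [heqE, inner_sub_right, inner_add_right, inner_smul_right] at h7
    have h8 := im_inner_symm Ω hΩ (Z τ₀)
    have h9 := inner_self_eq_norm_sq (𝕜 := ℂ) (ZE τ₀)
    simp only [RCLike.re_to_complex] at h9
    simp only [Complex.sub_re, Complex.add_re, Complex.mul_re, Complex.I_re,
      Complex.I_im, h8, h9] at h7
    linarith
  have hZW : ‖ZE τ₀‖ ≤ ‖WE τ₀‖ := by
    have hcs := re_inner_le_norm (𝕜 := ℂ) (ZE τ₀) (WE τ₀)
    simp only [RCLike.re_to_complex] at hcs
    nlinarith [norm_nonneg (ZE τ₀), norm_nonneg (WE τ₀)]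
  have hWE : Continuous WE := eE.continuous.comp hWc
  have hWEc : Continuous fun s => enorm2 (W s) := by
    have h : (fun s => enorm2 (W s)) = fun s => ‖WE s‖ := funext fun s => enorm2_eq _
    rw [h]
    exact hWE.norm
  have hbdd : BddAbove ((fun s => enorm2 (W s)) '' Set.Icc 0 (2 * π)) :=
    (isCompact_Icc.image hWEc).bddAbove
  intro τ
  have h1 : ‖ZE τ‖ ≤ ‖ZE τ₀‖ := by
    have h := hmax τ
    simp only [hgdef] at h
    nlinarith [norm_nonneg (ZE τ), norm_nonneg (ZE τ₀)]
  calc enorm2 (Z τ) = ‖ZE τ‖ := enorm2_eq _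
    _ ≤ ‖ZE τ₀‖ := h1
    _ ≤ ‖WE τ₀‖ := hZW
    _ = enorm2 (W τ₀) := (enorm2_eq _).symm
    _ ≤ sSup ((fun s => enorm2 (W s)) '' Set.Icc 0 (2 * π)) :=
        le_csSup hbdd ⟨τ₀, hτ₀mem, rfl⟩
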